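/- Let G be a connected graph of first Betti number g and q a vertex of G. Every divisor of degree g-1 on G is chip-firing equivalent to a unique q-orientable divisor. -/

import Mathlib

/-- A finite multigraph on vertex set `V` with edge set `E`. -/
structure Multigraph (V E : Type) where
  ends : E → V × V

namespace Multigraph

variable {V E : Type} [Fintype V] [Fintype E] [DecidableEq V]

/-- The graph Laplacian as a group homomorphism on divisors. -/
def lapHom (G : Multigraph V E) : (V → ℤ) →+ (V → ℤ) where
  toFun f := fun v =>
    ∑ e : E,
      ((if (G.ends e).1 = v then f (G.ends e).1 - f (G.ends e).2 else 0) +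
       (if (G.ends e).2 = v then f (G.ends e).2 - f (G.ends e).1 else 0))
  map_zero' := by funext v; simp
  map_add' f g := by
    funext v
    simp only [Pi.add_apply, ← Finset.sum_add_distrib]
    refine Finset.sum_congr rfl fun e _ => ?_
    split_ifs <;> ring

/-- The simple graph underlying a multigraph. -/
def toSimple (G : Multigraph V E) : SimpleGraph V :=
  SimpleGraph.fromRel (fun v w => ∃ e, G.ends e = (v, w))

/-- Given an orientation `o : E → Bool` (`true` meaning the edge is directed from its
first to its second endpoint), the head of an edge. -/
def head (G : Multigraph V E) (o : E → Bool) (e : E) : V :=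
  if o e then (G.ends e).2 else (G.ends e).1

/-- The tail of an oriented edge. -/
def tail (G : Multigraph V E) (o : E → Bool) (e : E) : V :=
  if o e then (G.ends e).1 else (G.ends e).2

/-- An orientation is `q`-connected if every vertex is reachable from `q` by a
directed path. -/
def QConnected (G : Multigraph V E) (o : E → Bool) (q : V) : Prop :=
  ∀ v : V, Relation.ReflTransGen (fun a b => ∃ e, G.tail o e = a ∧ G.head o e = b) q v

/-- The in-degree of a vertex under an orientation. -/
def indeg (G : Multigraph V E) (o : E → Bool) (v : V) : ℕ :=
  (Finset.univ.filter fun e => G.head o e = v).card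

/-- A divisor `D` is `q`-orientable if `D(v) = indeg(v) - 1` for some `q`-connected
orientation. -/
def IsQOrientable (G : Multigraph V E) (q : V) (D : V → ℤ) : Prop :=
  ∃ o : E → Bool, G.QConnected o q ∧ ∀ v, D v = (G.indeg o v : ℤ) - 1

end Multigraph

set_option linter.unusedSectionVars false

namespace QOrAux

open Multigraph Finset

variable {V E : Type} [Fintype V] [Fintype E] [DecidableEq V] [DecidableEq E]

lemma ite_eq_comm (a b : V) : (if a = b then (1:ℤ) else 0) = (if b = a then 1 else 0) := by
  rcases eq_or_ne a b with h | h
  · subst h; rfl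
  · rw [if_neg h, if_neg (Ne.symm h)]

/-- indicator function -/
def chi (a : V) : V → ℤ := fun v => if v = a then 1 else 0

/-- divisor of an orientation -/
def Dd (G : Multigraph V E) (o : E → Bool) : V → ℤ := fun v => (G.indeg o v : ℤ) - 1

lemma indeg_cast (G : Multigraph V E) (o : E → Bool) (v : V) :
    (G.indeg o v : ℤ) = ∑ e : E, (if G.head o e = v then (1:ℤ) else 0) := by
  rw [Multigraph.indeg, card_filter]
  push_cast
  rfl

/-- step relation -/
def Step (G : Multigraph V E) (o : E → Bool) (a b : V) : Prop :=
  ∃ e, G.tail o e = a ∧ G.head o e = b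

lemma sum_indeg (G : Multigraph V E) (o : E → Bool) :
    ∑ v : V, (G.indeg o v : ℤ) = (Fintype.card E : ℤ) := by
  simp only [indeg_cast]
  rw [Finset.sum_comm]
  simp [Finset.sum_ite_eq]

/-- flip one edge -/
def flip (e : E) (o : E → Bool) : E → Bool := fun e' => if e' = e then !(o e') else o e'

lemma flip_head (G : Multigraph V E) (o : E → Bool) (e : E) :
    G.head (flip e o) e = G.tail o e := by
  simp only [Multigraph.head, Multigraph.tail, flip, if_pos rfl]
  cases o e <;> simp

lemma flip_tail (G : Multigraph V E) (o : E → Bool) (e : E) :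
    G.tail (flip e o) e = G.head o e := by
  simp only [Multigraph.head, Multigraph.tail, flip, if_pos rfl]
  cases o e <;> simp

lemma flip_head_ne (G : Multigraph V E) (o : E → Bool) {e e' : E} (h : e' ≠ e) :
    G.head (flip e o) e' = G.head o e' := by
  simp [Multigraph.head, flip, h]

lemma flip_tail_ne (G : Multigraph V E) (o : E → Bool) {e e' : E} (h : e' ≠ e) :
    G.tail (flip e o) e' = G.tail o e' := by
  simp [Multigraph.tail, flip, h]

lemma Dd_flip (G : Multigraph V E) (o : E → Bool) (e : E) :
    Dd G (flip e o) = Dd G o + chi (G.tail o e) - chi (G.head o e) := by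
  funext v
  simp only [Dd, Pi.add_apply, Pi.sub_apply, chi, indeg_cast]
  rw [show (∑ x : E, ((if G.head (flip e o) x = v then (1:ℤ) else 0))) =
    ∑ x : E, ((if G.head o x = v then (1:ℤ) else 0) +
      (if x = e then ((if G.tail o e = v then (1:ℤ) else 0) - (if G.head o e = v then (1:ℤ) else 0)) else 0)) from ?_]
  · rw [Finset.sum_add_distrib, Finset.sum_ite_eq' Finset.univ e]
    simp only [Finset.mem_univ, if_true]
    have h1 : (if G.tail o e = v then (1:ℤ) else 0) = (if v = G.tail o e then (1:ℤ) else 0) := by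
      exact ite_eq_comm _ _
    have h2 : (if G.head o e = v then (1:ℤ) else 0) = (if v = G.head o e then (1:ℤ) else 0) := by
      exact ite_eq_comm _ _
    rw [h1, h2]; ring
  · refine Finset.sum_congr rfl fun x _ => ?_
    by_cases hx : x = e
    · subst hx
      rw [flip_head]
      split_ifs <;> simp_all
    · rw [flip_head_ne G o hx]
      simp [hx]

end QOrAux
namespace QOrAux

open Multigraph Finset

variable {V E : Type} [Fintype V] [Fintype E] [DecidableEq V] [DecidableEq E]

/-- a list of edges forming a directed path from `a` to `b` -/
def IsPath (G : Multigraph V E) (o : E → Bool) : V → V → List E → Prop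
  | a, b, [] => a = b
  | a, b, (e :: l) => G.tail o e = a ∧ IsPath G o (G.head o e) b l

lemma exists_path' (G : Multigraph V E) (o : E → Bool) {a b : V}
    (h : Relation.ReflTransGen (Step G o) a b) : ∃ l, IsPath G o a b l := by
  induction h using Relation.ReflTransGen.head_induction_on with
  | refl => exact ⟨[], rfl⟩
  | head hstep _ ih =>
    obtain ⟨l, hl⟩ := ih
    obtain ⟨e, he1, he2⟩ := hstep
    exact ⟨e :: l, by rw [IsPath, he1, he2]; exact ⟨rfl, hl⟩⟩

lemma isPath_flip (G : Multigraph V E) (o : E → Bool) (e : E) :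
    ∀ (l : List E) (a b : V), e ∉ l → IsPath G o a b l → IsPath G (flip e o) a b l := by
  intro l
  induction l with
  | nil => intro a b _ h; exact h
  | cons e' l ih =>
    intro a b hmem ⟨h1, h2⟩
    have hne : e' ≠ e := fun h => hmem (h ▸ List.mem_cons_self)
    refine ⟨by rw [flip_tail_ne G o hne]; exact h1, ?_⟩
    rw [flip_head_ne G o hne]
    exact ih _ _ (fun h => hmem (List.mem_cons_of_mem _ h)) h2

lemma isPath_mid (G : Multigraph V E) (o : E → Bool) (e : E) :
    ∀ (l₁ l₂ : List E) (a b : V), IsPath G o a b (l₁ ++ e :: l₂) →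
      IsPath G o (G.head o e) b l₂ := by
  intro l₁
  induction l₁ with
  | nil => intro l₂ a b h; exact h.2
  | cons e' l ih => intro l₂ a b h; exact ih _ _ _ h.2

lemma reverse_path_aux (G : Multigraph V E) :
    ∀ (n : ℕ) (l : List E) (o : E → Bool) (a b : V), l.length ≤ n → IsPath G o a b l →
      ∃ o', Dd G o' = Dd G o + chi a - chi b := by
  intro n
  induction n with
  | zero =>
    intro l o a b hlen hpath
    rw [List.length_eq_zero_iff.mp (Nat.le_zero.mp hlen)] at hpath
    exact ⟨o, by rw [hpath]; funext v; simp [chi]⟩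
  | succ n ih =>
    intro l o a b hlen hpath
    match l with
    | [] => exact ⟨o, by rw [hpath]; funext v; simp [chi]⟩
    | e :: l' =>
      obtain ⟨h1, h2⟩ := hpath
      by_cases hmem : e ∈ l'
      · obtain ⟨l₁, l₂, rfl⟩ := List.append_of_mem hmem
        have hmid : IsPath G o (G.head o e) b l₂ := isPath_mid G o e l₁ l₂ _ _ h2
        have : (e :: l₂).length ≤ n := by
          simp only [List.length_cons, List.length_append] at hlen ⊢
          omega
        exact ih (e :: l₂) o a b this ⟨h1, hmid⟩
      · have hpath' : IsPath G (flip e o) (G.head o e) b l' :=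
          isPath_flip G o e l' _ _ hmem h2
        have hlen' : l'.length ≤ n := by simp at hlen; omega
        obtain ⟨o', ho'⟩ := ih l' (flip e o) (G.head o e) b hlen' hpath'
        refine ⟨o', ?_⟩
        rw [ho', Dd_flip, h1]
        funext v; simp only [Pi.add_apply, Pi.sub_apply]; ring

lemma reverse_path (G : Multigraph V E) {o : E → Bool} {a b : V}
    (h : Relation.ReflTransGen (Step G o) a b) :
    ∃ o', Dd G o' = Dd G o + chi a - chi b := by
  obtain ⟨l, hl⟩ := exists_path' G o h
  exact reverse_path_aux G l.length l o a b le_rfl hl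

end QOrAux
namespace QOrAux

open Multigraph Finset

variable {V E : Type} [Fintype V] [Fintype E] [DecidableEq V] [DecidableEq E]

def chiS (S : Finset V) : V → ℤ := fun v => if v ∈ S then 1 else 0

/-- reverse all boundary edges of an out-closed set `S` -/
def ocut (G : Multigraph V E) (o : E → Bool) (S : Finset V) : E → Bool :=
  fun e => if G.head o e ∈ S ∧ G.tail o e ∉ S then !(o e) else o e

/-- the boundary edge, as oriented: tail outside, head inside -/
lemma boundary_orient (G : Multigraph V E) (o : E → Bool) {S : Finset V}
    (hS : ∀ e, G.tail o e ∈ S → G.head o e ∈ S) {e : E}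
    (h : ((G.ends e).1 ∈ S ∧ (G.ends e).2 ∉ S) ∨ ((G.ends e).2 ∈ S ∧ (G.ends e).1 ∉ S)) :
    G.head o e ∈ S ∧ G.tail o e ∉ S := by
  have hSe := hS e
  cases ho : o e
  case false =>
    have ht : G.tail o e = (G.ends e).2 := by simp [Multigraph.tail, ho]
    have hh : G.head o e = (G.ends e).1 := by simp [Multigraph.head, ho]
    rw [ht, hh] at hSe ⊢
    rcases h with ⟨h1, h2⟩ | ⟨h1, h2⟩
    · exact ⟨h1, h2⟩
    · exact absurd (hSe h1) h2
  case true =>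
    have ht : G.tail o e = (G.ends e).1 := by simp [Multigraph.tail, ho]
    have hh : G.head o e = (G.ends e).2 := by simp [Multigraph.head, ho]
    rw [ht, hh] at hSe ⊢
    rcases h with ⟨h1, h2⟩ | ⟨h1, h2⟩
    · exact absurd (hSe h1) h2
    · exact ⟨h1, h2⟩

lemma Dd_ocut (G : Multigraph V E) (o : E → Bool) (S : Finset V)
    (hS : ∀ e, G.tail o e ∈ S → G.head o e ∈ S) :
    Dd G (ocut G o S) = Dd G o - G.lapHom (chiS S) := by
  funext v
  simp only [Dd, Pi.sub_apply, Multigraph.lapHom, AddMonoidHom.coe_mk, ZeroHom.coe_mk,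
    indeg_cast]
  rw [show ((∑ e : E, if G.head o e = v then (1:ℤ) else 0) - 1 -
      ∑ e : E,
        ((if (G.ends e).1 = v then chiS S (G.ends e).1 - chiS S (G.ends e).2 else 0) +
          if (G.ends e).2 = v then chiS S (G.ends e).2 - chiS S (G.ends e).1 else 0)) =
      (∑ e : E, ((if G.head o e = v then (1:ℤ) else 0) -
        ((if (G.ends e).1 = v then chiS S (G.ends e).1 - chiS S (G.ends e).2 else 0) +
          if (G.ends e).2 = v then chiS S (G.ends e).2 - chiS S (G.ends e).1 else 0))) - 1 by
    rw [Finset.sum_sub_distrib]; ring]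
  rw [sub_left_inj]
  refine Finset.sum_congr rfl fun e _ => ?_
  by_cases hrev : G.head o e ∈ S ∧ G.tail o e ∉ S
  · -- reversed boundary edge
    have hh : G.head (ocut G o S) e = G.tail o e := by
      have : ocut G o S e = !(o e) := if_pos hrev
      simp only [Multigraph.head, Multigraph.tail, this]
      cases o e <;> rfl
    rw [hh]
    obtain ⟨h1, h2⟩ := hrev
    cases ho : o e with
    | false =>
      have ht : G.tail o e = (G.ends e).2 := by simp [Multigraph.tail, ho]
      have hhd : G.head o e = (G.ends e).1 := by simp [Multigraph.head, ho]
      rw [hhd] at h1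
      rw [ht] at h2
      rw [ht, hhd]
      simp only [chiS, if_pos h1, if_neg h2]
      split_ifs <;> ring
    | true =>
      have ht : G.tail o e = (G.ends e).1 := by simp [Multigraph.tail, ho]
      have hhd : G.head o e = (G.ends e).2 := by simp [Multigraph.head, ho]
      rw [hhd] at h1
      rw [ht] at h2
      rw [ht, hhd]
      simp only [chiS, if_pos h1, if_neg h2]
      split_ifs <;> ring
  · -- edge not reversed
    have hh : G.head (ocut G o S) e = G.head o e := by
      have hoe : ocut G o S e = o e := if_neg hrev
      simp only [Multigraph.head, hoe]
    rw [hh]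
    have hab : ((G.ends e).1 ∈ S) ↔ ((G.ends e).2 ∈ S) := by
      constructor
      · intro h1
        by_contra h2
        exact hrev (boundary_orient G o hS (Or.inl ⟨h1, h2⟩))
      · intro h1
        by_contra h2
        exact hrev (boundary_orient G o hS (Or.inr ⟨h1, h2⟩))
    have hz : chiS S (G.ends e).1 = chiS S (G.ends e).2 := by
      simp only [chiS]
      by_cases h1 : (G.ends e).1 ∈ S
      · rw [if_pos h1, if_pos (hab.mp h1)]
      · rw [if_neg h1, if_neg (fun h => h1 (hab.mpr h))]
    rw [hz]
    split_ifs <;> ring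

lemma reach_subset (G : Multigraph V E) (o : E → Bool) {S : Finset V}
    (hS : ∀ e, G.tail o e ∈ S → G.head o e ∈ S) {a b : V} (ha : a ∈ S)
    (h : Relation.ReflTransGen (Step G o) a b) : b ∈ S := by
  induction h with
  | refl => exact ha
  | tail _ hstep ih =>
    obtain ⟨e, he1, he2⟩ := hstep
    exact he2 ▸ hS e (he1 ▸ ih)

lemma reach_ocut (G : Multigraph V E) (o : E → Bool) {S : Finset V}
    (hS : ∀ e, G.tail o e ∈ S → G.head o e ∈ S) {a b : V} (ha : a ∈ S)
    (h : Relation.ReflTransGen (Step G o) a b) :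
    Relation.ReflTransGen (Step G (ocut G o S)) a b := by
  induction h with
  | refl => exact Relation.ReflTransGen.refl
  | @tail x y hx hstep ih =>
    refine Relation.ReflTransGen.tail ih ?_
    obtain ⟨e, he1, he2⟩ := hstep
    have hxS : x ∈ S := reach_subset G o hS ha hx
    have hnotrev : ¬(G.head o e ∈ S ∧ G.tail o e ∉ S) := fun ⟨_, h2⟩ => h2 (he1 ▸ hxS)
    refine ⟨e, ?_, ?_⟩
    · rwa [Multigraph.tail, ocut, if_neg hnotrev, ← Multigraph.tail]
    · rwa [Multigraph.head, ocut, if_neg hnotrev, ← Multigraph.head]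

lemma step_ocut_boundary (G : Multigraph V E) (o : E → Bool) {S : Finset V} {e : E}
    (h1 : G.head o e ∈ S) (h2 : G.tail o e ∉ S) :
    Step G (ocut G o S) (G.head o e) (G.tail o e) := by
  have hrev : ocut G o S e = !(o e) := if_pos ⟨h1, h2⟩
  have p1 : G.tail (ocut G o S) e = G.head o e := by
    simp only [Multigraph.tail, Multigraph.head, hrev]
    cases o e <;> rfl
  have p2 : G.head (ocut G o S) e = G.tail o e := by
    simp only [Multigraph.tail, Multigraph.head, hrev]
    cases o e <;> rfl
  exact ⟨e, p1, p2⟩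

lemma walk_cross (G : Multigraph V E) (S : Finset V) :
    ∀ {u w : V} (_ : G.toSimple.Walk u w), u ∈ S → w ∉ S →
      ∃ a b, G.toSimple.Adj a b ∧ a ∈ S ∧ b ∉ S := by
  intro u w p
  induction p with
  | nil => intro h1 h2; exact absurd h1 h2
  | @cons u x w h p ih =>
    intro h1 h2
    by_cases hx : x ∈ S
    · exact ih hx h2
    · exact ⟨u, x, h, h1, hx⟩

lemma exists_boundary (G : Multigraph V E) (hconn : G.toSimple.Connected) {S : Finset V}
    (hne : S.Nonempty) (hne2 : S ≠ Finset.univ) :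
    ∃ e, ((G.ends e).1 ∈ S ∧ (G.ends e).2 ∉ S) ∨ ((G.ends e).2 ∈ S ∧ (G.ends e).1 ∉ S) := by
  obtain ⟨u, hu⟩ := hne
  have : ∃ w, w ∉ S := by
    by_contra h
    push_neg at h
    exact hne2 (Finset.eq_univ_iff_forall.mpr h)
  obtain ⟨w, hw⟩ := this
  obtain ⟨p⟩ := hconn.preconnected u w
  obtain ⟨a, b, hadj, haS, hbS⟩ := walk_cross G S p hu hw
  rw [Multigraph.toSimple, SimpleGraph.fromRel_adj] at hadj
  obtain ⟨-, h | h⟩ := hadj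
  · obtain ⟨e, he⟩ := h
    exact ⟨e, Or.inl ⟨by rw [he]; exact haS, by rw [he]; exact hbS⟩⟩
  · obtain ⟨e, he⟩ := h
    exact ⟨e, Or.inr ⟨by rw [he]; exact haS, by rw [he]; exact hbS⟩⟩

end QOrAux
namespace QOrAux

open Multigraph Finset

variable {V E : Type} [Fintype V] [Fintype E] [DecidableEq V] [DecidableEq E]

noncomputable def reachSet (G : Multigraph V E) (o : E → Bool) (q : V) : Finset V :=
  (Set.toFinite {v | Relation.ReflTransGen (Step G o) q v}).toFinset

lemma mem_reachSet {G : Multigraph V E} {o : E → Bool} {q v : V} :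
    v ∈ reachSet G o q ↔ Relation.ReflTransGen (Step G o) q v :=
  Set.Finite.mem_toFinset _

lemma reachSet_closed (G : Multigraph V E) (o : E → Bool) (q : V) :
    ∀ e, G.tail o e ∈ reachSet G o q → G.head o e ∈ reachSet G o q := by
  intro e he
  rw [mem_reachSet] at he ⊢
  exact Relation.ReflTransGen.tail he ⟨e, rfl, rfl⟩

lemma self_mem_reachSet (G : Multigraph V E) (o : E → Bool) (q : V) :
    q ∈ reachSet G o q := mem_reachSet.mpr Relation.ReflTransGen.refl

/-- Cut step: given an orientation whose reach set from `q` is not everything,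
reversing the cut strictly increases the reach set while changing `Dd` by a
Laplacian element. -/
lemma cut_step (G : Multigraph V E) (hconn : G.toSimple.Connected) (o : E → Bool) (q : V)
    (hne : reachSet G o q ≠ Finset.univ) :
    ∃ o', (reachSet G o' q)ᶜ.card < (reachSet G o q)ᶜ.card ∧
      Dd G o' - Dd G o ∈ G.lapHom.range := by
  set S := reachSet G o q with hSdef
  have hS : ∀ e, G.tail o e ∈ S → G.head o e ∈ S := reachSet_closed G o q
  obtain ⟨e0, he0⟩ := exists_boundary G hconn ⟨q, self_mem_reachSet G o q⟩ hne
  obtain ⟨hhd, htl⟩ := boundary_orient G o hS he0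
  refine ⟨ocut G o S, ?_, ?_⟩
  · have hsub : S ⊆ reachSet G (ocut G o S) q := by
      intro u hu
      exact mem_reachSet.mpr (reach_ocut G o hS (self_mem_reachSet G o q) (mem_reachSet.mp hu))
    have htail : G.tail o e0 ∈ reachSet G (ocut G o S) q := by
      rw [mem_reachSet]
      refine Relation.ReflTransGen.tail ?_ (step_ocut_boundary G o hhd htl)
      exact reach_ocut G o hS (self_mem_reachSet G o q) (mem_reachSet.mp hhd)
    have hss : S ⊂ reachSet G (ocut G o S) q :=
      (Finset.ssubset_iff_of_subset hsub).mpr ⟨G.tail o e0, htail, htl⟩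
    have h1 := Finset.card_lt_card hss
    have h2 := Finset.card_le_univ (reachSet G (ocut G o S) q)
    rw [Finset.card_compl, Finset.card_compl]
    omega
  · rw [Dd_ocut G o S hS]
    have h : Dd G o - G.lapHom (chiS S) - Dd G o = -(G.lapHom (chiS S)) := by ring
    rw [h]
    exact neg_mem ⟨chiS S, rfl⟩


lemma make_qconnected (G : Multigraph V E) (hconn : G.toSimple.Connected) (q : V) :
    ∀ (n : ℕ) (o : E → Bool), (reachSet G o q)ᶜ.card ≤ n →
      ∃ o', G.QConnected o' q ∧ Dd G o' - Dd G o ∈ G.lapHom.range := by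
  intro n
  induction n using Nat.strong_induction_on with
  | _ n ih =>
    intro o hcard
    by_cases hall : reachSet G o q = Finset.univ
    · refine ⟨o, ?_, by simpa using zero_mem G.lapHom.range⟩
      intro v
      exact mem_reachSet.mp (hall ▸ Finset.mem_univ v)
    · obtain ⟨o₂, hlt, hmem⟩ := cut_step G hconn o q hall
      have hn : (reachSet G o₂ q)ᶜ.card < n := lt_of_lt_of_le hlt hcard
      obtain ⟨o', hq, hmem'⟩ := ih _ hn o₂ le_rfl
      refine ⟨o', hq, ?_⟩
      have : Dd G o' - Dd G o = (Dd G o' - Dd G o₂) + (Dd G o₂ - Dd G o) := by ring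
      rw [this]
      exact add_mem hmem' hmem

lemma sum_chi (a : V) : ∑ v : V, chi a v = 1 := by
  simp [chi, Finset.sum_ite_eq]

/-- Phase 1: absorb a degree-zero divisor into the orientation, up to Laplacian. -/
lemma absorb (G : Multigraph V E) (hconn : G.toSimple.Connected) :
    ∀ (m : ℕ) (d : V → ℤ) (o : E → Bool), (∑ v, d v = 0) → (∑ v, (d v).natAbs ≤ m) →
      ∃ o', Dd G o' - (Dd G o + d) ∈ G.lapHom.range := by
  intro m
  induction m using Nat.strong_induction_on with
  | _ m ih =>
  intro d o hsum hm
  by_cases hd : d = 0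
  · subst hd
    exact ⟨o, by simpa using zero_mem G.lapHom.range⟩
  · have hv : ∃ v, 0 < d v := by
      by_contra h
      push_neg at h
      refine hd (funext fun v => ?_)
      have := (Finset.sum_eq_zero_iff_of_nonpos (fun w _ => h w)).mp hsum
      exact this v (Finset.mem_univ v)
    obtain ⟨v₀, hv₀⟩ := hv
    -- inner induction on the complement of the reach set of v₀
    suffices h : ∀ (n : ℕ) (o : E → Bool), (reachSet G o v₀)ᶜ.card ≤ n →
        ∃ o', Dd G o' - (Dd G o + d) ∈ G.lapHom.range from h _ o le_rfl
    intro n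
    induction n using Nat.strong_induction_on with
    | _ n ihn =>
    intro o hcard
    by_cases hneg : ∃ w ∈ reachSet G o v₀, d w < 0
    · -- reverse a path from v₀ to w
      obtain ⟨w, hwreach, hw⟩ := hneg
      have hvw : v₀ ≠ w := fun h => by rw [h] at hv₀; omega
      obtain ⟨o₁, ho₁⟩ := reverse_path G (mem_reachSet.mp hwreach)
      set d₁ : V → ℤ := d - chi v₀ + chi w with hd₁
      have heqd : Dd G o₁ + d₁ = Dd G o + d := by rw [ho₁]; ring
      have hsum₁ : ∑ v, d₁ v = 0 := by
        simp only [hd₁, Pi.add_apply, Pi.sub_apply]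
        rw [Finset.sum_add_distrib, Finset.sum_sub_distrib, sum_chi, sum_chi, hsum]
        ring
      have hm1 : 1 ≤ m := le_trans (by
        calc 1 ≤ (d v₀).natAbs := by omega
        _ ≤ ∑ v, (d v).natAbs := Finset.single_le_sum (f := fun v => (d v).natAbs)
              (fun v _ => Nat.zero_le _) (Finset.mem_univ v₀)) hm
      have hd₁v : ∀ v, d₁ v = d v - (if v = v₀ then 1 else 0) + (if v = w then 1 else 0) :=
        fun v => rfl
      have hkey : ∀ v, (d₁ v).natAbs + (if v = v₀ then 1 else 0) + (if v = w then 1 else 0)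
          ≤ (d v).natAbs := by
        intro v
        rw [hd₁v v]
        rcases eq_or_ne v v₀ with rfl | h1
        · simp only [if_pos (rfl : v = v), if_neg hvw]
          simp only [eq_self_iff_true, if_true]
          omega
        · rcases eq_or_ne v w with rfl | h2
          · simp only [if_neg h1, eq_self_iff_true, if_true]
            omega
          · simp only [if_neg h1, if_neg h2]
            omega
      have hsum_le : (∑ v, (d₁ v).natAbs) + 2 ≤ m := by
        have := Finset.sum_le_sum (fun v (_ : v ∈ Finset.univ) => hkey v)
        rw [Finset.sum_add_distrib, Finset.sum_add_distrib] at this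
        simp only [Finset.sum_ite_eq' Finset.univ, Finset.mem_univ, if_true] at this
        omega
      obtain ⟨o', ho'⟩ := ih (m - 1) (by omega) d₁ o₁ hsum₁ (by omega)
      exact ⟨o', by rwa [heqd] at ho'⟩
    · -- cut step
      push_neg at hneg
      have hne : reachSet G o v₀ ≠ Finset.univ := by
        intro hall
        have hpos : ∀ w ∈ Finset.univ.erase v₀, 0 ≤ d w := by
          intro w hw
          exact hneg w (hall ▸ Finset.mem_univ w)
        have h0 : 0 ≤ ∑ w ∈ Finset.univ.erase v₀, d w := Finset.sum_nonneg hpos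
        have hsplit := Finset.add_sum_erase Finset.univ d (Finset.mem_univ v₀)
        omega
      obtain ⟨o₂, hlt, hmem⟩ := cut_step G hconn o v₀ hne
      obtain ⟨o', ho'⟩ := ihn _ (lt_of_lt_of_le hlt hcard) o₂ le_rfl
      refine ⟨o', ?_⟩
      have : Dd G o' - (Dd G o + d) = (Dd G o' - (Dd G o₂ + d)) + (Dd G o₂ - Dd G o) := by ring
      rw [this]
      exact add_mem ho' hmem

end QOrAux
namespace QOrAux

open Multigraph Finset

variable {V E : Type} [Fintype V] [Fintype E] [DecidableEq V] [DecidableEq E]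

lemma sum_lap (G : Multigraph V E) (f : V → ℤ) (S : Finset V) :
    ∑ v ∈ S, G.lapHom f v =
      ∑ e : E, ((if (G.ends e).1 ∈ S then f (G.ends e).1 - f (G.ends e).2 else 0) +
        (if (G.ends e).2 ∈ S then f (G.ends e).2 - f (G.ends e).1 else 0)) := by
  simp only [Multigraph.lapHom, AddMonoidHom.coe_mk, ZeroHom.coe_mk]
  rw [Finset.sum_comm]
  refine Finset.sum_congr rfl fun e _ => ?_
  rw [Finset.sum_add_distrib, Finset.sum_ite_eq, Finset.sum_ite_eq]

lemma sum_indeg_S (G : Multigraph V E) (o : E → Bool) (S : Finset V) :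
    ∑ v ∈ S, (G.indeg o v : ℤ) = ∑ e : E, (if G.head o e ∈ S then (1:ℤ) else 0) := by
  simp only [indeg_cast]
  rw [Finset.sum_comm]
  refine Finset.sum_congr rfl fun e _ => ?_
  rw [Finset.sum_ite_eq]

lemma head_mem_ends (G : Multigraph V E) (o : E → Bool) (e : E) :
    G.head o e = (G.ends e).1 ∨ G.head o e = (G.ends e).2 := by
  rw [Multigraph.head]
  cases o e <;> simp

lemma uniq_orientable (G : Multigraph V E) (q : V) {o o' : E → Bool} {f : V → ℤ}
    (ho : G.QConnected o q) (ho' : G.QConnected o' q)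
    (hf : G.lapHom f = Dd G o - Dd G o') : Dd G o = Dd G o' := by
  obtain ⟨v₀, -, hmax⟩ := Finset.exists_max_image Finset.univ f ⟨q, Finset.mem_univ q⟩
  set S : Finset V := Finset.univ.filter (fun v => f v = f v₀) with hSdef
  have hv₀S : v₀ ∈ S := by simp [hSdef]
  by_cases hSuniv : S = Finset.univ
  · -- f is constant, so lapHom f = 0
    have hconst : ∀ v, f v = f v₀ := by
      intro v
      have : v ∈ S := hSuniv ▸ Finset.mem_univ v
      simpa [hSdef] using this
    have hzero : G.lapHom f = 0 := by
      funext v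
      simp only [Multigraph.lapHom, AddMonoidHom.coe_mk, ZeroHom.coe_mk, Pi.zero_apply]
      refine Finset.sum_eq_zero fun e _ => ?_
      rw [hconst (G.ends e).1, hconst (G.ends e).2]
      split_ifs <;> ring
    exact sub_eq_zero.mp (hf.symm.trans hzero)
  · -- the per-edge quantities
    exfalso
    set L : E → ℤ := fun e =>
      ((if (G.ends e).1 ∈ S then f (G.ends e).1 - f (G.ends e).2 else 0) +
        (if (G.ends e).2 ∈ S then f (G.ends e).2 - f (G.ends e).1 else 0)) with hLdef
    set R : E → ℤ := fun e =>
      ((if G.head o e ∈ S then (1:ℤ) else 0) - (if G.head o' e ∈ S then (1:ℤ) else 0)) with hRdef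
    have hmemS : ∀ {v}, v ∈ S → f v = f v₀ := by
      intro v hv
      simpa [hSdef] using hv
    have hnotS : ∀ {v}, v ∉ S → f v ≤ f v₀ - 1 := by
      intro v hv
      have h1 : f v ≠ f v₀ := by
        intro h
        exact hv (by simp [hSdef, h])
      have h2 : f v ≤ f v₀ := hmax v (Finset.mem_univ v)
      omega
    have hsum_eq : ∑ e, L e = ∑ e, R e := by
      rw [← sum_lap, hf]
      simp only [Pi.sub_apply, Dd]
      rw [Finset.sum_sub_distrib]
      have h1 : ∑ v ∈ S, ((G.indeg o v : ℤ) - 1) - ∑ v ∈ S, ((G.indeg o' v : ℤ) - 1)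
          = ∑ v ∈ S, (G.indeg o v : ℤ) - ∑ v ∈ S, (G.indeg o' v : ℤ) := by
        rw [Finset.sum_sub_distrib, Finset.sum_sub_distrib]
        ring
      rw [h1, sum_indeg_S, sum_indeg_S, ← Finset.sum_sub_distrib]
    have hLR : ∀ e, R e ≤ L e := by
      intro e
      simp only [hLdef, hRdef]
      by_cases ha : (G.ends e).1 ∈ S <;> by_cases hb : (G.ends e).2 ∈ S
      · -- both ends in S: heads in S
        have h1 : G.head o e ∈ S := by rcases head_mem_ends G o e with h | h <;> rw [h] <;> assumption
        have h2 : G.head o' e ∈ S := by rcases head_mem_ends G o' e with h | h <;> rw [h] <;> assumption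
        rw [if_pos ha, if_pos hb, if_pos h1, if_pos h2]
        ring_nf
        omega
      · have := hmemS ha
        have := hnotS hb
        rw [if_pos ha, if_neg hb]
        split_ifs <;> omega
      · have := hmemS hb
        have := hnotS ha
        rw [if_neg ha, if_pos hb]
        split_ifs <;> omega
      · have h1 : G.head o e ∉ S := by rcases head_mem_ends G o e with h | h <;> rw [h] <;> assumption
        have h2 : G.head o' e ∉ S := by rcases head_mem_ends G o' e with h | h <;> rw [h] <;> assumption
        rw [if_neg ha, if_neg hb, if_neg h1, if_neg h2]
        ring_nf
        omega
    have hall : ∀ e, L e = R e := by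
      have hz : ∑ e ∈ Finset.univ, (L e - R e) = 0 := by
        rw [Finset.sum_sub_distrib, hsum_eq]; ring
      have := (Finset.sum_eq_zero_iff_of_nonneg
        (fun e (_ : e ∈ Finset.univ) => sub_nonneg.mpr (hLR e))).mp hz
      intro e
      have h := this e (Finset.mem_univ e)
      omega
    -- mixed edges: head o ∈ S and head o' ∉ S
    have hmixed : ∀ e, ((G.ends e).1 ∈ S ↔ (G.ends e).2 ∈ S) ∨
        (G.head o e ∈ S ∧ G.head o' e ∉ S) := by
      intro e
      by_cases ha : (G.ends e).1 ∈ S <;> by_cases hb : (G.ends e).2 ∈ S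
      · exact Or.inl (by simp [ha, hb])
      · refine Or.inr ?_
        have hL : 1 ≤ L e := by
          have := hmemS ha
          have := hnotS hb
          simp only [hLdef]
          rw [if_pos ha, if_neg hb]
          omega
        have h := hall e
        simp only [hRdef] at h
        constructor
        · by_contra hc
          rw [if_neg hc] at h
          split_ifs at h <;> omega
        · by_contra hc
          rw [if_pos hc] at h
          split_ifs at h <;> omega
      · refine Or.inr ?_
        have hL : 1 ≤ L e := by
          have := hmemS hb
          have := hnotS ha
          simp only [hLdef]
          rw [if_neg ha, if_pos hb]
          omega
        have h := hall e
        simp only [hRdef] at h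
        constructor
        · by_contra hc
          rw [if_neg hc] at h
          split_ifs at h <;> omega
        · by_contra hc
          rw [if_pos hc] at h
          split_ifs at h <;> omega
      · exact Or.inl (by simp [ha, hb])
    -- S is out-closed for o
    have hclosed : ∀ e, G.tail o e ∈ S → G.head o e ∈ S := by
      intro e hte
      rcases hmixed e with hiff | ⟨h1, _⟩
      · have htm : G.tail o e = (G.ends e).1 ∨ G.tail o e = (G.ends e).2 := by
          rw [Multigraph.tail]; cases o e <;> simp
        rcases head_mem_ends G o e with h | h <;> rw [h] <;>
          rcases htm with h' | h' <;> rw [h'] at hte <;>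
          [exact hte; exact hiff.mpr hte; exact hiff.mp hte; exact hte]
      · exact h1
    -- complement of S is out-closed for o'
    have hclosed' : ∀ e, G.tail o' e ∈ Sᶜ → G.head o' e ∈ Sᶜ := by
      intro e hte
      rw [Finset.mem_compl] at hte ⊢
      rcases hmixed e with hiff | ⟨_, h2⟩
      · intro hm
        apply hte
        have htm : G.tail o' e = (G.ends e).1 ∨ G.tail o' e = (G.ends e).2 := by
          rw [Multigraph.tail]; cases o' e <;> simp
        rcases head_mem_ends G o' e with h | h <;> rw [h] at hm <;>
          rcases htm with h' | h' <;> rw [h']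
        · exact hm
        · exact hiff.mp hm
        · exact hiff.mpr hm
        · exact hm
      · exact h2
    by_cases hq : q ∈ S
    · obtain ⟨w, hw⟩ : ∃ w, w ∉ S := by
        by_contra h
        push_neg at h
        exact hSuniv (Finset.eq_univ_iff_forall.mpr h)
      exact hw (reach_subset G o hclosed hq (ho w))
    · have : v₀ ∈ Sᶜ := reach_subset G o' hclosed' (Finset.mem_compl.mpr hq) (ho' v₀)
      exact (Finset.mem_compl.mp this) hv₀S

end QOrAux
open Multigraph in
/-- Let `G` be a connected multigraph with first Betti number
`g = |E| - |V| + 1` and `q` a vertex. Every divisor of degree `g - 1` is chip-firing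
equivalent to a unique `q`-orientable divisor. -/
theorem unique_q_orientable_equiv {V E : Type} [Fintype V] [Fintype E] [DecidableEq V]
    (G : Multigraph V E) (hconn : G.toSimple.Connected) (q : V) (D : V → ℤ)
    (hdeg : ∑ v, D v = (Fintype.card E : ℤ) - (Fintype.card V : ℤ)) :
    ∃! D' : V → ℤ, G.IsQOrientable q D' ∧ D - D' ∈ G.lapHom.range := by
  classical
  set o₀ : E → Bool := fun _ => true with ho₀
  set d₀ : V → ℤ := D - QOrAux.Dd G o₀ with hd₀
  have hsum₀ : ∑ v, d₀ v = 0 := by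
    simp only [hd₀, Pi.sub_apply]
    rw [Finset.sum_sub_distrib, hdeg]
    have h : ∑ v, QOrAux.Dd G o₀ v = (Fintype.card E : ℤ) - Fintype.card V := by
      simp only [QOrAux.Dd]
      rw [Finset.sum_sub_distrib, QOrAux.sum_indeg]
      simp [Finset.card_univ]
    rw [h]; ring
  obtain ⟨o₁, h₁⟩ := QOrAux.absorb G hconn (∑ v, (d₀ v).natAbs) d₀ o₀ hsum₀ le_rfl
  have h₁' : QOrAux.Dd G o₁ - D ∈ G.lapHom.range := by
    have h : QOrAux.Dd G o₀ + d₀ = D := by rw [hd₀]; ring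
    rwa [h] at h₁
  obtain ⟨o₂, hq₂, h₂⟩ :=
    QOrAux.make_qconnected G hconn q ((QOrAux.reachSet G o₁ q)ᶜ.card) o₁ le_rfl
  have hx : D - QOrAux.Dd G o₂ ∈ G.lapHom.range := by
    have h : D - QOrAux.Dd G o₂
        = -((QOrAux.Dd G o₂ - QOrAux.Dd G o₁) + (QOrAux.Dd G o₁ - D)) := by ring
    rw [h]
    exact neg_mem (add_mem h₂ h₁')
  refine ⟨QOrAux.Dd G o₂, ⟨⟨o₂, hq₂, fun v => rfl⟩, hx⟩, ?_⟩
  rintro D'' ⟨⟨o'', hq'', heq''⟩, hr''⟩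
  have hD'' : D'' = QOrAux.Dd G o'' := funext fun v => heq'' v
  have hmem : QOrAux.Dd G o'' - QOrAux.Dd G o₂ ∈ G.lapHom.range := by
    have h : QOrAux.Dd G o'' - QOrAux.Dd G o₂ = (D - QOrAux.Dd G o₂) - (D - D'') := by
      rw [hD'']; ring
    rw [h]
    exact sub_mem hx hr''
  obtain ⟨f, hf⟩ := hmem
  rw [hD'']
  exact QOrAux.uniq_orientable G q hq'' hq₂ hf
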